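/- Let 0 < a < 1, 0 < ε < 1, ℓ > 0, π > 0, and for natural n ≥ 1 set γ_n = nπ/ℓ, h_n = (a + ε γ_n²)/2, ω_n = √(h_n² − γ_n²) whenever h_n ≥ γ_n. Let N₂ be the largest natural number smaller than (ℓ/(πε))(1 + √(1 − aε)). Then there exist positive constants B₁ (independent of ε) such that for all t ≥ 1, ∑_{n=N₂+1}^∞ e^{-h_n t} sinh(ω_n t)/ω_n ≤ B₁ e^{-t/(4ε)}. -/

import Mathlib

open Real

set_option maxHeartbeats 1000000

lemma aux_xexp (x : ℝ) (hx : 0 ≤ x) : x * Real.exp (-x/4) ≤ 2 := by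
  rw [show -x/4 = -(x/4) by ring, Real.exp_neg]
  rw [mul_inv_le_iff₀ (Real.exp_pos _)]
  have h := Real.add_one_le_exp (x/8)
  have h2 : Real.exp (x/4) = Real.exp (x/8) * Real.exp (x/8) := by
    rw [← Real.exp_add]; ring_nf
  nlinarith [sq_nonneg (x - 8), Real.exp_pos (x/8)]

lemma aux_sinh_le (x : ℝ) : Real.sinh x ≤ x * Real.exp x := by
  rw [Real.sinh_eq]
  have h1 : (-(2*x)) + 1 ≤ Real.exp (-(2*x)) := Real.add_one_le_exp _
  have h2 : Real.exp (-(2*x)) = Real.exp (-x) * Real.exp (-x) := by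
    rw [← Real.exp_add]; ring_nf
  have h3 : Real.exp (-x) * Real.exp x = 1 := by
    rw [← Real.exp_add]; simp
  nlinarith [Real.exp_pos x, Real.exp_pos (-x)]

lemma aux_sinh_le' (x : ℝ) : Real.sinh x ≤ Real.exp x / 2 := by
  rw [Real.sinh_eq]
  have := Real.exp_pos (-x)
  linarith

lemma aux_summable_sq : Summable (fun k : ℕ => (1 : ℝ) / ((k : ℝ) + 1)^2) := by
  have h : Summable (fun n : ℕ => (1 : ℝ) / (n : ℝ) ^ 2) :=
    summable_one_div_nat_pow.mpr one_lt_two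
  have := (summable_nat_add_iff (f := fun n : ℕ => (1 : ℝ) / (n : ℝ) ^ 2) 1).mpr h
  refine this.congr fun k => ?_
  push_cast; ring

lemma aux_sum_sq : ∑' k : ℕ, (1 : ℝ) / ((k : ℝ) + 1)^2 ≤ 2 := by
  have hs : Summable (fun n : ℕ => (1 : ℝ) / (n : ℝ) ^ 2) := hasSum_zeta_two.summable
  have h0 : ∑' n : ℕ, (1 : ℝ) / (n : ℝ) ^ 2 = π ^ 2 / 6 := hasSum_zeta_two.tsum_eq
  have h1 : ∑' n : ℕ, (1 : ℝ) / (n : ℝ) ^ 2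
      = (1 : ℝ)/(0:ℝ)^2 + ∑' k : ℕ, (1 : ℝ) / ((k+1 : ℕ) : ℝ) ^ 2 := by
    exact_mod_cast Summable.tsum_eq_zero_add hs
  have h2 : ∑' k : ℕ, (1 : ℝ) / ((k+1 : ℕ) : ℝ) ^ 2 = ∑' k : ℕ, (1 : ℝ) / ((k : ℝ) + 1) ^ 2 := by
    congr 1; ext k; push_cast; ring
  have hpi : π < 3.15 := pi_lt_d2
  have hpi0 : 0 < π := pi_pos
  rw [← h2]
  have h3 : (1 : ℝ)/(0:ℝ)^2 = 0 := by norm_num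
  rw [h3, zero_add] at h1
  rw [← h1, h0]
  nlinarith

lemma term_bound (a ℓ ε t : ℝ) (ha : 0 < a) (ha1 : a < 1) (hℓ : 0 < ℓ)
    (hε : 0 < ε) (hε1 : ε < 1) (ht : 1 ≤ t) (N₂ k : ℕ)
    (hN2 : ℓ / (π * ε) * (1 + Real.sqrt (1 - a * ε)) ≤ (N₂ : ℝ) + 1) :
    Real.exp (-((a + ε * ((((k + N₂ + 1 : ℕ) : ℝ)) * π / ℓ) ^ 2) / 2) * t) *
      Real.sinh (Real.sqrt (((a + ε * ((((k + N₂ + 1 : ℕ) : ℝ)) * π / ℓ) ^ 2) / 2) ^ 2 -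
        ((((k + N₂ + 1 : ℕ) : ℝ)) * π / ℓ) ^ 2) * t) /
      Real.sqrt (((a + ε * ((((k + N₂ + 1 : ℕ) : ℝ)) * π / ℓ) ^ 2) / 2) ^ 2 -
        ((((k + N₂ + 1 : ℕ) : ℝ)) * π / ℓ) ^ 2)
    ≤ Real.exp (-t/(2*ε)) * (4*(t + ℓ^2/ε)) * (1/((k:ℝ)+1)^2) := by
  have hπ : 0 < π := pi_pos
  have htpos : 0 < t := lt_of_lt_of_le one_pos ht
  have hae : 0 ≤ 1 - a * ε := by nlinarith
  set s : ℝ := Real.sqrt (1 - a * ε) with hsdef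
  have hs2 : s ^ 2 = 1 - a * ε := Real.sq_sqrt hae
  have hs0 : 0 ≤ s := Real.sqrt_nonneg _
  set G : ℝ := (((k + N₂ + 1 : ℕ) : ℝ)) * π / ℓ with hGdef
  set H : ℝ := (a + ε * G ^ 2) / 2 with hHdef
  set W : ℝ := Real.sqrt (H ^ 2 - G ^ 2) with hWdef
  set q : ℝ := (k : ℝ) * π / ℓ with hqdef
  have hq0 : 0 ≤ q := by positivity
  have hεq0 : 0 ≤ ε * q := mul_nonneg hε.le hq0
  -- G ≥ q + (1+s)/ε
  have hkey : (1 + s) / ε ≤ ((N₂ : ℝ) + 1) * π / ℓ := by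
    have h := mul_le_mul_of_nonneg_right hN2 (le_of_lt (div_pos hπ hℓ))
    have e1 : ℓ / (π * ε) * (1 + s) * (π / ℓ) = (1 + s) / ε := by
      field_simp
    have e2 : ((N₂ : ℝ) + 1) * (π / ℓ) = ((N₂ : ℝ) + 1) * π / ℓ := by ring
    rw [e1, e2] at h
    exact h
  have hG : q + (1 + s) / ε ≤ G := by
    rw [hGdef, hqdef]
    push_cast
    have e : (↑k + ↑N₂ + 1 : ℝ) * π / ℓ = (k:ℝ) * π / ℓ + ((N₂:ℝ) + 1) * π / ℓ := by ring
    rw [e]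
    linarith [hkey]
  have hεG : 1 + s + ε * q ≤ ε * G := by
    have h := mul_le_mul_of_nonneg_left hG hε.le
    have e : ε * ((1 + s) / ε) = 1 + s := mul_div_cancel₀ _ hε.ne'
    nlinarith [h]
  have hεG1 : 1 ≤ ε * G := by linarith
  have hGpos : 0 < G := by nlinarith
  have hHG : G ≤ H := by
    have h1 : 0 ≤ ε * G - 1 - s := by linarith
    have h2 : 0 ≤ ε * G - 1 + s := by linarith
    have h3 : 0 ≤ (ε * G - 1 - s) * (ε * G - 1 + s) := mul_nonneg h1 h2
    have e : (ε * G - 1 - s) * (ε * G - 1 + s)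
        = ε * (ε * G^2 - 2*G + a) - (s^2 - (1 - a*ε)) := by ring
    rw [e] at h3
    have h4 : 0 ≤ ε * (ε * G^2 - 2*G + a) := by linarith [hs2]
    have h5 : 0 ≤ ε * G^2 - 2*G + a := by
      by_contra hc
      push_neg at hc
      nlinarith
    rw [hHdef]; linarith
  have hH2G2 : 0 ≤ H ^ 2 - G ^ 2 := by
    have h1 : 0 ≤ (H - G) * (H + G) :=
      mul_nonneg (by linarith) (by linarith)
    have e : (H - G) * (H + G) = H^2 - G^2 := by ring
    linarith
  have hW0 : 0 ≤ W := Real.sqrt_nonneg _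
  have hW2 : W ^ 2 = H ^ 2 - G ^ 2 := Real.sq_sqrt hH2G2
  have hHpos : 0 < H := lt_of_lt_of_le hGpos hHG
  have hεG2 : 1 ≤ ε ^ 2 * G ^ 2 := by
    have h1 : 1*1 ≤ (ε*G)*(ε*G) := mul_le_mul hεG1 hεG1 (by norm_num) (by linarith)
    nlinarith [h1]
  have hHhalf : 1 / (2 * ε) ≤ H := by
    rw [div_le_iff₀ (by positivity)]
    rw [hHdef]
    nlinarith [mul_pos ha hε]
  have hWH : W ≤ H - 1 / (2 * ε) := by
    have hsq : H ^ 2 - G ^ 2 ≤ (H - 1 / (2 * ε)) ^ 2 := by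
      have e : (H - 1/(2*ε))^2 - (H^2 - G^2) = (1 - 2*a*ε + 2*ε^2*G^2)/(4*ε^2) := by
        rw [hHdef]; field_simp; ring
      have hpos : 0 ≤ (1 - 2*a*ε + 2*ε^2*G^2)/(4*ε^2) := by
        apply div_nonneg _ (by positivity)
        nlinarith
      linarith [e ▸ hpos]
    calc W ≤ Real.sqrt ((H - 1/(2*ε))^2) := Real.sqrt_le_sqrt hsq
      _ = H - 1/(2*ε) := Real.sqrt_sq (by linarith)
  have hexp : Real.exp (-H * t) * Real.exp (W * t) ≤ Real.exp (-t / (2 * ε)) := by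
    rw [← Real.exp_add]
    apply Real.exp_le_exp.mpr
    have h1 : 1/(2*ε) * t ≤ (H - W) * t :=
      mul_le_mul_of_nonneg_right (by linarith) htpos.le
    have h2 : -t / (2*ε) = -(1/(2*ε) * t) := by ring
    rw [h2]; nlinarith
  have hRHSpos : 0 < Real.exp (-t/(2*ε)) * (4*(t + ℓ^2/ε)) * (1/((k:ℝ)+1)^2) := by
    positivity
  rcases Nat.eq_zero_or_pos k with hk | hk
  · -- k = 0 : use sinh x ≤ x e^x
    subst hk
    rcases eq_or_lt_of_le hW0 with hW | hWpos
    · rw [← hW, div_zero]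
      exact hRHSpos.le
    · have hsinh : Real.sinh (W * t) ≤ (W * t) * Real.exp (W * t) := aux_sinh_le _
      have hC : 0 < ℓ^2/ε := by positivity
      calc Real.exp (-H * t) * Real.sinh (W*t) / W
          ≤ Real.exp (-H * t) * ((W*t) * Real.exp (W*t)) / W :=
            (div_le_div_iff_of_pos_right hWpos).mpr
              (mul_le_mul_of_nonneg_left hsinh (Real.exp_nonneg _))
        _ = t * (Real.exp (-H * t) * Real.exp (W*t)) := by
            field_simp
        _ ≤ t * Real.exp (-t/(2*ε)) := mul_le_mul_of_nonneg_left hexp htpos.le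
        _ ≤ Real.exp (-t/(2*ε)) * (4*(t + ℓ^2/ε)) * (1/(((0:ℕ):ℝ)+1)^2) := by
            push_cast
            norm_num
            nlinarith [Real.exp_pos (-t/(2*ε)), hC]
  · -- k ≥ 1
    set K : ℝ := (k : ℝ) with hKdef
    have hK1 : (1:ℝ) ≤ K := by
      have h : (1:ℕ) ≤ k := hk
      rw [hKdef]
      exact_mod_cast h
    have hKpos : (0:ℝ) < K := by linarith
    have hqpos : 0 < q := by
      rw [hqdef]
      exact div_pos (mul_pos hKpos hπ) hℓ
    have hHmG : ε/2 * q^2 ≤ H - G := by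
      have h1 : ε*q ≤ ε*G - 1 - s := by linarith [hεG]
      have h2 : ε*q ≤ ε*G - 1 + s := by linarith [hεG]
      have h3 : (ε*q)*(ε*q) ≤ (ε*G-1-s)*(ε*G-1+s) :=
        mul_le_mul h1 h2 hεq0 (le_trans hεq0 h1)
      have e : (ε*G-1-s)*(ε*G-1+s)
          = ε*(ε*G^2 - 2*G + a) - (s^2 - (1-a*ε)) := by ring
      rw [e] at h3
      have h4 : (ε*q)*(ε*q) ≤ ε*(ε*G^2-2*G+a) := by linarith [hs2]
      have h5 : ε * (ε*q^2) ≤ ε * (ε*G^2-2*G+a) :=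
        calc ε * (ε*q^2) = (ε*q)*(ε*q) := by ring
          _ ≤ ε*(ε*G^2-2*G+a) := h4
      have h6 : ε*q^2 ≤ ε*G^2-2*G+a := le_of_mul_le_mul_left h5 hε
      rw [hHdef]; linarith
    have hGq : q ≤ G := by
      have : (0:ℝ) ≤ (1+s)/ε := div_nonneg (by linarith) hε.le
      linarith [hG]
    have hHq : ε/2 * q^2 ≤ H := by
      have h0 : q^2 ≤ G^2 := pow_le_pow_left₀ hq0 hGq 2
      have h1 : ε*q^2 ≤ ε*G^2 := mul_le_mul_of_nonneg_left h0 hε.le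
      rw [hHdef]; linarith
    have hWlb : ε/2 * q^2 ≤ W := by
      have hP : 0 ≤ ε/2 * q^2 := by positivity
      have p1 : (ε/2*q^2)*(ε/2*q^2) ≤ (H-G)*H :=
        mul_le_mul hHmG hHq hP (by linarith)
      have p2 : (H-G)*H ≤ (H-G)*(H+G) :=
        mul_le_mul_of_nonneg_left (by linarith) (by linarith)
      have e2 : (H-G)*(H+G) = H^2 - G^2 := by ring
      have h1 : (ε/2*q^2)^2 ≤ H^2 - G^2 := by linarith [p1, p2]
      calc ε/2*q^2 = Real.sqrt ((ε/2*q^2)^2) := (Real.sqrt_sq hP).symm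
        _ ≤ W := Real.sqrt_le_sqrt h1
    have hPpos : 0 < ε/2 * q^2 := mul_pos (half_pos hε) (pow_pos hqpos 2)
    have hWpos : 0 < W := lt_of_lt_of_le hPpos hWlb
    have hπ3 : 3 < π := pi_gt_three
    have hbig : 1/(ε*q^2) ≤ 4*(t+ℓ^2/ε)*(1/(K+1)^2) := by
      rw [hqdef, div_le_iff₀ (by positivity)]
      have e : 4*(t+ℓ^2/ε)*(1/(K+1)^2)*(ε*(K*π/ℓ)^2)
          = (4*(ε*t)+4*ℓ^2)*(K^2*π^2)/(ℓ^2*(K+1)^2) := by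
        field_simp
      rw [e, le_div_iff₀ (by positivity)]
      have hKK : (K+1)^2 ≤ 4*K^2 := by
        have h := pow_le_pow_left₀ (by linarith : (0:ℝ) ≤ K+1) (by linarith : K+1 ≤ 2*K) 2
        calc (K+1)^2 ≤ (2*K)^2 := h
          _ = 4*K^2 := by ring
      have hπ2 : (1:ℝ) ≤ π^2 := by
        have h := pow_le_pow_left₀ (by norm_num : (0:ℝ) ≤ 1) (by linarith : (1:ℝ) ≤ π) 2
        simpa using h
      have c1 : ℓ^2*(K+1)^2 ≤ ℓ^2*(4*K^2) := mul_le_mul_of_nonneg_left hKK (sq_nonneg ℓ)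
      have c2 : 4*K^2*1 ≤ 4*K^2*π^2 :=
        mul_le_mul_of_nonneg_left hπ2 (by positivity)
      have c2' : ℓ^2*(4*K^2) ≤ ℓ^2*(4*K^2*π^2) :=
        mul_le_mul_of_nonneg_left (by linarith) (sq_nonneg ℓ)
      have c3 : 0 ≤ 4*(ε*t)*(K^2*π^2) := by positivity
      linarith [c1, c2', c3]
    have h1div : 1/(2*W) ≤ 4*(t+ℓ^2/ε)*(1/(K+1)^2) := by
      refine le_trans (one_div_le_one_div_of_le (by positivity) (by linarith [hWlb])) hbig
    calc Real.exp (-H * t) * Real.sinh (W*t) / W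
        ≤ Real.exp (-H * t) * (Real.exp (W*t)/2) / W :=
          (div_le_div_iff_of_pos_right hWpos).mpr
            (mul_le_mul_of_nonneg_left (aux_sinh_le' _) (Real.exp_nonneg _))
      _ = (Real.exp (-H * t) * Real.exp (W*t)) * (1/(2*W)) := by
          field_simp
      _ ≤ Real.exp (-t/(2*ε)) * (1/(2*W)) :=
          mul_le_mul_of_nonneg_right hexp (by positivity)
      _ ≤ Real.exp (-t/(2*ε)) * (4*(t+ℓ^2/ε)*(1/(K+1)^2)) :=
          mul_le_mul_of_nonneg_left h1div (Real.exp_nonneg _)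
      _ = Real.exp (-t/(2*ε)) * (4*(t + ℓ^2/ε)) * (1/(K+1)^2) := by ring

open Real in
/-- Lemma 1 (tail estimate): the series of hyperbolic modes `n ≥ N₂ + 1` of the Green
function decays like `e^{-t/(4ε)}`, with constant `B₁` independent of `ε`. -/
theorem tail_hyperbolic_modes_estimate (a ℓ : ℝ)
    (ha : 0 < a) (ha1 : a < 1) (hℓ : 0 < ℓ) :
    ∃ B₁ > (0 : ℝ), ∀ ε : ℝ, 0 < ε → ε < 1 →
      ∀ N₂ : ℕ,
        -- N₂ is the largest natural number smaller than (ℓ/(πε))(1 + √(1 - aε))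
        ((N₂ : ℝ) < ℓ / (π * ε) * (1 + Real.sqrt (1 - a * ε)) ∧
          ℓ / (π * ε) * (1 + Real.sqrt (1 - a * ε)) ≤ (N₂ : ℝ) + 1) →
        ∀ t : ℝ, 1 ≤ t →
          (∑' k : ℕ,
            (fun n : ℕ =>
              Real.exp (-((a + ε * (n * π / ℓ) ^ 2) / 2) * t) *
                Real.sinh (Real.sqrt (((a + ε * (n * π / ℓ) ^ 2) / 2) ^ 2 -
                    (n * π / ℓ) ^ 2) * t) /
                  Real.sqrt (((a + ε * (n * π / ℓ) ^ 2) / 2) ^ 2 - (n * π / ℓ) ^ 2))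
              (k + N₂ + 1)) ≤ B₁ * Real.exp (-t / (4 * ε)) := by
  refine ⟨16*(1+ℓ^2), by positivity, ?_⟩
  intro ε hε hε1 N₂ hN t ht
  obtain ⟨-, hN2⟩ := hN
  have htpos : 0 < t := lt_of_lt_of_le one_pos ht
  by_cases hsum : Summable (fun k : ℕ =>
      (fun n : ℕ =>
        Real.exp (-((a + ε * (n * π / ℓ) ^ 2) / 2) * t) *
          Real.sinh (Real.sqrt (((a + ε * (n * π / ℓ) ^ 2) / 2) ^ 2 -
              (n * π / ℓ) ^ 2) * t) /
            Real.sqrt (((a + ε * (n * π / ℓ) ^ 2) / 2) ^ 2 - (n * π / ℓ) ^ 2))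
        (k + N₂ + 1))
  · -- summable case
    have hg : Summable (fun k : ℕ =>
        Real.exp (-t/(2*ε)) * (4*(t + ℓ^2/ε)) * (1/((k:ℝ)+1)^2)) := by
      refine (aux_summable_sq.mul_left
        (Real.exp (-t/(2*ε)) * (4*(t + ℓ^2/ε)))).congr fun k => by ring
    have hle : ∀ k : ℕ,
        (fun n : ℕ =>
          Real.exp (-((a + ε * (n * π / ℓ) ^ 2) / 2) * t) *
            Real.sinh (Real.sqrt (((a + ε * (n * π / ℓ) ^ 2) / 2) ^ 2 -
                (n * π / ℓ) ^ 2) * t) /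
              Real.sqrt (((a + ε * (n * π / ℓ) ^ 2) / 2) ^ 2 - (n * π / ℓ) ^ 2))
          (k + N₂ + 1)
        ≤ Real.exp (-t/(2*ε)) * (4*(t + ℓ^2/ε)) * (1/((k:ℝ)+1)^2) :=
      fun k => term_bound a ℓ ε t ha ha1 hℓ hε hε1 ht N₂ k hN2
    have h1 := Summable.tsum_le_tsum hle hsum hg
    have h2 : ∑' k : ℕ, Real.exp (-t/(2*ε)) * (4*(t + ℓ^2/ε)) * (1/((k:ℝ)+1)^2)
        = Real.exp (-t/(2*ε)) * (4*(t + ℓ^2/ε)) * ∑' k : ℕ, (1:ℝ)/((k:ℝ)+1)^2 :=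
      tsum_mul_left
    have h3 : Real.exp (-t/(2*ε)) * (4*(t + ℓ^2/ε)) * (∑' k : ℕ, (1:ℝ)/((k:ℝ)+1)^2)
        ≤ Real.exp (-t/(2*ε)) * (4*(t + ℓ^2/ε)) * 2 :=
      mul_le_mul_of_nonneg_left aux_sum_sq (by positivity)
    have hesplit : Real.exp (-t/(2*ε)) = Real.exp (-t/(4*ε)) * Real.exp (-t/(4*ε)) := by
      rw [← Real.exp_add]
      congr 1
      field_simp
      ring
    have hb1 : t * Real.exp (-t/(4*ε)) ≤ 2 := by
      have he : Real.exp (-t/(4*ε)) ≤ Real.exp (-t/4) := by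
        apply Real.exp_le_exp.mpr
        rw [div_le_div_iff₀ (by positivity) (by norm_num : (0:ℝ) < 4)]
        nlinarith [mul_le_mul_of_nonneg_left hε1.le htpos.le]
      calc t * Real.exp (-t/(4*ε)) ≤ t * Real.exp (-t/4) :=
            mul_le_mul_of_nonneg_left he htpos.le
        _ ≤ 2 := aux_xexp t (by linarith)
    have hb2 : (ℓ^2/ε) * Real.exp (-t/(4*ε)) ≤ 2*ℓ^2 := by
      have he : Real.exp (-t/(4*ε)) ≤ Real.exp (-(1/ε)/4) := by
        apply Real.exp_le_exp.mpr
        have e : -(1/ε)/4 = -1/(4*ε) := by ring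
        rw [e, div_le_div_iff₀ (by positivity) (by positivity)]
        nlinarith [ht, hε]
      have h2' : (1/ε) * Real.exp (-(1/ε)/4) ≤ 2 := aux_xexp (1/ε) (by positivity)
      calc (ℓ^2/ε) * Real.exp (-t/(4*ε))
          ≤ (ℓ^2/ε) * Real.exp (-(1/ε)/4) :=
            mul_le_mul_of_nonneg_left he (by positivity)
        _ = ℓ^2 * ((1/ε) * Real.exp (-(1/ε)/4)) := by ring
        _ ≤ ℓ^2 * 2 := mul_le_mul_of_nonneg_left h2' (sq_nonneg ℓ)
        _ = 2*ℓ^2 := by ring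
    have h4 : Real.exp (-t/(2*ε)) * (4*(t + ℓ^2/ε)) * 2
        ≤ 16*(1+ℓ^2) * Real.exp (-t/(4*ε)) := by
      calc Real.exp (-t/(2*ε)) * (4*(t + ℓ^2/ε)) * 2
          = 8 * (t * Real.exp (-t/(4*ε)) + (ℓ^2/ε) * Real.exp (-t/(4*ε)))
              * Real.exp (-t/(4*ε)) := by rw [hesplit]; ring
        _ ≤ 8 * (2 + 2*ℓ^2) * Real.exp (-t/(4*ε)) := by
            apply mul_le_mul_of_nonneg_right _ (Real.exp_nonneg _)
            have : t * Real.exp (-t/(4*ε)) + (ℓ^2/ε) * Real.exp (-t/(4*ε)) ≤ 2 + 2*ℓ^2 := by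
              linarith
            linarith
        _ = 16*(1+ℓ^2) * Real.exp (-t/(4*ε)) := by ring
    have hfinal : -t/(4*ε) = -(t / (4 * ε)) := by ring
    calc (∑' k : ℕ, _) ≤ _ := h1
      _ = _ := h2
      _ ≤ _ := h3
      _ ≤ 16*(1+ℓ^2) * Real.exp (-t/(4*ε)) := h4
      _ = 16*(1+ℓ^2) * Real.exp (-t / (4 * ε)) := by norm_num
  · rw [tsum_eq_zero_of_not_summable hsum]
    positivity
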